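/- Let G be a countable residually finite group. Then the partial Bernoulli action θ of G on X_G = {x ∈ {0,1}^G : x(e) = 1} (with the metric d(x,y) = Σ_k 2^{−k}|x(t_k) − y(t_k)| for a fixed enumeration G = {t_0 = e, t_1, t_2, ...}) is residually finite-dimensional: for every δ > 0 there exist a finite set Z, a partial action η of G on Z, and a strictly equivariant map ρ : Z → X_G whose range is δ-dense in X_G. -/
import Mathlib


/-- A partial action of a group `G` on a set `X`, given by domains `U t ⊆ X` and maps
`θ t` (recorded as total maps, only their values on `U t⁻¹` matter): `U 1 = X`,
`θ 1 = id`, `θ t` maps `U t⁻¹` into `U t`, and `θ (s*t)` extends `θ s ∘ θ t`. -/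
def IsPartialAction {G X : Type*} [Group G] (U : G → Set X) (θ : G → X → X) : Prop :=
  U 1 = Set.univ ∧ (∀ x : X, θ 1 x = x) ∧ (∀ (t : G) (x : X), x ∈ U t⁻¹ → θ t x ∈ U t) ∧
    ∀ (s t : G) (x : X), x ∈ U t⁻¹ → θ t x ∈ U s⁻¹ →
      x ∈ U (s * t)⁻¹ ∧ θ s (θ t x) = θ (s * t) x

/-- Auxiliary: the partial Bernoulli map on a finite group. -/
noncomputable def pbMap {Γ : Type} [Group Γ] (g : Γ) (z : {z : Γ → Bool // z 1 = true}) :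
    {z : Γ → Bool // z 1 = true} := by
  classical
  exact if h : z.1 g⁻¹ = true then ⟨fun γ => z.1 (g⁻¹ * γ), by simpa using h⟩ else z

lemma pbMap_pos {Γ : Type} [Group Γ] (g : Γ) (z : {z : Γ → Bool // z 1 = true})
    (h : z.1 g⁻¹ = true) : (pbMap g z).1 = fun γ => z.1 (g⁻¹ * γ) := by
  classical
  rw [pbMap]
  simp only [dif_pos h]

/-- If `G` is a countable residually finite group, then the partial Bernoulli action of
`G` on `X_G = {x ∈ {0,1}^G : x 1 = 1}` (with domains `U t = {x : x 1 = x t = 1}`, maps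
`θ t x = x ∘ σ t⁻¹`, and the metric `d(x,y) = Σ_k 2⁻ᵏ |x (t_k) − y (t_k)|` for a fixed
enumeration `t : ℕ → G` with `t 0 = 1`) is residually finite-dimensional: for every
`δ > 0` there are a finite set `Z`, a partial action `η` of `G` on `Z` with domains
`V t`, and a strictly equivariant map `ρ : Z → X_G` with `δ`-dense range. -/
theorem partial_bernoulli_RFD {G : Type*} [Group G] [Countable G]
    (hRF : ∀ F : Finset G, ∃ (Γ : Type) (_ : Fintype Γ) (_ : Group Γ) (ψ : G →* Γ),
      Set.InjOn ψ (insert 1 (F : Set G)))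
    (t : ℕ → G) (ht0 : t 0 = 1) (htsurj : Function.Surjective t)
    (d : (G → Bool) → (G → Bool) → ℝ)
    (hd : ∀ x y : G → Bool, d x y = ∑' k : ℕ,
      (1 / 2 : ℝ) ^ k * |(if x (t k) then (1 : ℝ) else 0) - (if y (t k) then (1 : ℝ) else 0)|)
    (θ : G → (G → Bool) → (G → Bool))
    (hθ : ∀ (s : G) (x : G → Bool) (r : G), θ s x r = x (s⁻¹ * r))
    (U : G → Set (G → Bool))
    (hU : ∀ s : G, U s = {x : G → Bool | x 1 = true ∧ x s = true})
    (δ : ℝ) (hδ : 0 < δ) :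
    ∃ (Z : Type) (_ : Fintype Z) (V : G → Set Z) (η : G → Z → Z),
      IsPartialAction V η ∧
      ∃ ρ : Z → (G → Bool),
        (∀ z : Z, ρ z 1 = true) ∧
        (∀ s : G, ρ '' V s ⊆ U s) ∧
        (∀ (s : G) (z : Z), ρ z ∈ U s → z ∈ V s) ∧
        (∀ (s : G) (z : Z), z ∈ V s⁻¹ → ρ (η s z) = θ s (ρ z)) ∧
        ∀ x : G → Bool, x 1 = true → ∃ z : Z, d (ρ z) x < δ := by
  classical
  -- choose N > 0 with (1/2)^N * 2 < δ
  obtain ⟨N, hNpos, hN⟩ : ∃ N : ℕ, 0 < N ∧ (1 / 2 : ℝ) ^ N < δ / 2 := by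
    obtain ⟨M, hM⟩ := exists_pow_lt_of_lt_one (show (0:ℝ) < δ/2 by linarith)
      (show (1/2:ℝ) < 1 by norm_num)
    refine ⟨M + 1, Nat.succ_pos _, lt_of_le_of_lt ?_ hM⟩
    exact pow_le_pow_of_le_one (by norm_num) (by norm_num) (Nat.le_succ M)
  -- residual finiteness for F = t '' range N
  obtain ⟨Γ, hFin, hGrp, ψ, hinj⟩ := hRF ((Finset.range N).image t)
  refine ⟨{z : Γ → Bool // z 1 = true}, Fintype.ofFinite _,
    fun s => {z | z.1 (ψ s) = true}, fun s z => pbMap (ψ s) z, ?_, ?_⟩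
  · -- IsPartialAction
    refine ⟨?_, ?_, ?_, ?_⟩
    · ext z; simpa using z.2
    · intro z
      refine Subtype.ext ?_
      rw [pbMap_pos (ψ 1) z (by simpa using z.2)]
      funext γ; simp
    · intro s z hz
      have hz' : z.1 (ψ s)⁻¹ = true := by
        simpa [map_inv] using hz
      simp only [Set.mem_setOf_eq]
      have := pbMap_pos (ψ s) z hz'
      rw [show ((pbMap (ψ s) z).1 (ψ s)) = (fun γ => z.1 ((ψ s)⁻¹ * γ)) (ψ s) from by rw [this]]
      simp [z.2]
    · intro s u z hz hsz
      simp only [Set.mem_setOf_eq] at hz hsz ⊢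
      have hz' : z.1 (ψ u)⁻¹ = true := by simpa [map_inv] using hz
      have hval : (pbMap (ψ u) z).1 = fun γ => z.1 ((ψ u)⁻¹ * γ) := pbMap_pos _ _ hz'
      have hsz' : (pbMap (ψ u) z).1 (ψ s)⁻¹ = true := by
        simpa [map_inv] using hsz
      have hst : z.1 (ψ (s * u))⁻¹ = true := by
        have : (ψ (s * u))⁻¹ = (ψ u)⁻¹ * (ψ s)⁻¹ := by
          rw [map_mul, mul_inv_rev]
        rw [this]
        have := hsz'
        rw [hval] at this
        exact this
      constructor
      · simpa [map_inv] using hst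
      · refine Subtype.ext ?_
        rw [pbMap_pos (ψ s) _ hsz', pbMap_pos (ψ (s*u)) z hst, hval]
        funext γ
        simp only
        congr 1
        rw [map_mul, mul_inv_rev, mul_assoc]
  · -- the map ρ
    refine ⟨fun z g => z.1 (ψ g), ?_, ?_, ?_, ?_, ?_⟩
    · intro z; simpa using z.2
    · intro s y hy
      obtain ⟨z, hz, rfl⟩ := hy
      rw [hU]
      exact ⟨by simpa using z.2, hz⟩
    · intro s z hz
      rw [hU] at hz
      exact hz.2
    · intro s z hz
      simp only [Set.mem_setOf_eq] at hz
      have hz' : z.1 (ψ s)⁻¹ = true := by simpa [map_inv] using hz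
      funext g
      dsimp only
      rw [pbMap_pos (ψ s) z hz', hθ]
      simp only
      rw [map_mul, map_inv]
    · -- density
      intro x hx
      set P : Γ → Prop := fun γ => ∃ k, k < N ∧ ψ (t k) = γ ∧ x (t k) = true with hP
      refine ⟨⟨fun γ => if P γ then true else false, ?_⟩, ?_⟩
      · have : P 1 := by
          refine ⟨0, hNpos, ?_, ?_⟩
          · rw [ht0, map_one]
          · rw [ht0, hx]
        simp [this]
      · -- key: values agree for k < N
        have key : ∀ k, k < N →
            (if P (ψ (t k)) then true else false) = x (t k) := by
          intro k hk
          have hmem : ∀ i, i < N →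
              t i ∈ insert 1 (((Finset.range N).image t : Finset G) : Set G) := by
            intro i hi
            exact Set.mem_insert_iff.mpr (Or.inr (by
              simp only [Finset.coe_image, Set.mem_image, Finset.coe_range, Set.mem_Iio]
              exact ⟨i, hi, rfl⟩))
          by_cases hxk : x (t k) = true
          · rw [if_pos ⟨k, hk, rfl, hxk⟩, hxk]
          · have hnp : ¬ P (ψ (t k)) := by
              rintro ⟨j, hj, hjk, hxj⟩
              have := hinj (hmem j hj) (hmem k hk) hjk
              rw [this] at hxj
              exact hxk hxj
            simp only [Bool.not_eq_true] at hxk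
            rw [if_neg hnp, hxk]
        rw [hd]
        set f : ℕ → ℝ := fun k =>
          (1 / 2 : ℝ) ^ k *
            |(if (if P (ψ (t k)) then true else false) = true then (1 : ℝ) else 0) -
              (if x (t k) = true then (1 : ℝ) else 0)| with hf
        have hf0 : ∀ k, k < N → f k = 0 := by
          intro k hk
          simp only [hf, key k hk, sub_self, abs_zero, mul_zero]
        have hfle : ∀ k, f k ≤ (1 / 2 : ℝ) ^ k := by
          intro k
          have h1 : |(if (if P (ψ (t k)) then true else false) = true then (1 : ℝ) else 0) -
              (if x (t k) = true then (1 : ℝ) else 0)| ≤ 1 := by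
            split_ifs <;> norm_num
          calc f k ≤ (1 / 2 : ℝ) ^ k * 1 := by
                refine mul_le_mul_of_nonneg_left h1 (by positivity)
            _ = (1 / 2 : ℝ) ^ k := mul_one _
        have hfnn : ∀ k, 0 ≤ f k := fun k => by positivity
        have hsumg : Summable (fun k : ℕ => (1 / 2 : ℝ) ^ k) :=
          summable_geometric_of_lt_one (by norm_num) (by norm_num)
        have hsumf : Summable f := hsumg.of_nonneg_of_le hfnn hfle
        have heq : ∑' k, f k = ∑' k, f (k + N) := by
          have := Summable.sum_add_tsum_nat_add N hsumf
          rw [Finset.sum_eq_zero (fun i hi => hf0 i (Finset.mem_range.mp hi)), zero_add] at this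
          exact this.symm
        have hbound : ∑' k, f (k + N) ≤ ∑' k : ℕ, (1 / 2 : ℝ) ^ (k + N) := by
          refine Summable.tsum_le_tsum (fun k => hfle (k + N))
            (hsumf.comp_injective (add_left_injective N)) ?_
          exact (hsumg.comp_injective (add_left_injective N))
        have hgeo : ∑' k : ℕ, (1 / 2 : ℝ) ^ (k + N) = (1 / 2 : ℝ) ^ N * 2 := by
          have : ∀ k : ℕ, (1 / 2 : ℝ) ^ (k + N) = (1 / 2 : ℝ) ^ N * (1 / 2 : ℝ) ^ k := by
            intro k; rw [pow_add, mul_comm]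
          rw [tsum_congr this, tsum_mul_left, tsum_geometric_two]
        calc (∑' k, f k) = ∑' k, f (k + N) := heq
          _ ≤ (1 / 2 : ℝ) ^ N * 2 := hbound.trans_eq hgeo
          _ < δ := by linarith
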